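/- arXiv:2112.02352 — 4 statements merged into one kernel-verified Lean document; each statement's English description precedes it below -/
import Mathlib

section
/- Let K ⊆ L be simplicial complexes with L = K ∪ {σ, τ} where σ and τ are each maximal in L and σ ⊄ τ, σ ≠ τ. Suppose there exist a cycle x ⊆ K ∪ {σ} with σ ∈ x and a cycle x' ⊆ L with τ ∈ x'. Then there exists a cycle y ⊆ K ∪ {τ} with τ ∈ y and a cycle y' ⊆ L with σ ∈ y'. (I.e., in a forward switch, if both additions give birth indices in F, then both additions give birth indices in F'.) -/
open Finset

variable {V : Type} [DecidableEq V]

/-- The facets of a simplex `σ` (a simplex is a finite set of vertices):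
all subsets obtained by removing one vertex. -/
def facets (σ : Finset V) : Finset (Finset V) := σ.image (fun v => σ.erase v)

/-- The mod-2 boundary of a chain `c` (a chain is a set of simplices):
a simplex `τ` belongs to `bd c` iff `τ` is a facet of an odd number of members of `c`. -/
def bd (c : Finset (Finset V)) : Finset (Finset V) :=
  (c.biUnion facets).filter (fun τ => Odd ((c.filter (fun ρ => τ ∈ facets ρ)).card))

/-- A finite simplicial complex: simplices are nonempty finite sets of vertices,
closed under taking nonempty subsets. -/
def IsComplex (K : Finset (Finset V)) : Prop :=
  (∀ σ ∈ K, σ.Nonempty) ∧ ∀ σ ∈ K, ∀ τ, τ ⊆ σ → τ.Nonempty → τ ∈ K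

/-- `z` is a chain in `L` all of whose simplices have exactly `d` vertices
(i.e. a `(d-1)`-dimensional chain, with mod-2 chains identified with sets of simplices). -/
def IsChainIn (L : Finset (Finset V)) (d : ℕ) (z : Finset (Finset V)) : Prop :=
  z ⊆ L ∧ ∀ ρ ∈ z, ρ.card = d

/-- `z` is a cycle in `L` made of simplices with `d` vertices (a `(d-1)`-dimensional cycle). -/
def IsCycleIn (L : Finset (Finset V)) (d : ℕ) (z : Finset (Finset V)) : Prop :=
  IsChainIn L d z ∧ bd z = ∅

/-- `x` is the boundary of some chain of `L` whose simplices have `d` vertices. -/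
def IsBoundaryIn (L : Finset (Finset V)) (d : ℕ) (x : Finset (Finset V)) : Prop :=
  ∃ c, IsChainIn L d c ∧ bd c = x
lemma mem_bd_iff {c : Finset (Finset V)} {a : Finset V} :
    a ∈ bd c ↔ Odd ((c.filter (fun ρ => a ∈ facets ρ)).card) := by
  constructor
  · intro h
    exact (mem_filter.mp h).2
  · intro h
    have hne : (c.filter (fun ρ => a ∈ facets ρ)).Nonempty := by
      rw [← card_pos]
      rcases h with ⟨k, hk⟩
      omega
    obtain ⟨ρ, hρ⟩ := hne
    rw [mem_filter] at hρ
    exact mem_filter.mpr ⟨mem_biUnion.mpr ⟨ρ, hρ.1, hρ.2⟩, h⟩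

lemma bd_eq_empty_iff {c : Finset (Finset V)} :
    bd c = ∅ ↔ ∀ a : Finset V, ¬ Odd ((c.filter (fun ρ => a ∈ facets ρ)).card) := by
  rw [eq_empty_iff_forall_notMem]
  exact forall_congr' fun a => not_congr mem_bd_iff

lemma bd_sdiff_union {x x' : Finset (Finset V)} (hx : bd x = ∅) (hx' : bd x' = ∅) :
    bd ((x \ x') ∪ (x' \ x)) = ∅ := by
  rw [bd_eq_empty_iff] at hx hx' ⊢
  intro a
  have hd1 : Disjoint (x \ x') (x ∩ x') := disjoint_sdiff_inter x x'
  have hd2 : Disjoint (x' \ x) (x' ∩ x) := disjoint_sdiff_inter x' x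
  have hd3 : Disjoint (x \ x') (x' \ x) := disjoint_sdiff_sdiff
  have h1 : ((x \ x').filter (fun ρ => a ∈ facets ρ)).card
      + ((x ∩ x').filter (fun ρ => a ∈ facets ρ)).card
      = (x.filter (fun ρ => a ∈ facets ρ)).card := by
    rw [← card_union_of_disjoint (disjoint_filter_filter hd1), ← filter_union,
      sdiff_union_inter]
  have h2 : ((x' \ x).filter (fun ρ => a ∈ facets ρ)).card
      + ((x' ∩ x).filter (fun ρ => a ∈ facets ρ)).card
      = (x'.filter (fun ρ => a ∈ facets ρ)).card := by
    rw [← card_union_of_disjoint (disjoint_filter_filter hd2), ← filter_union,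
      sdiff_union_inter]
  have h3 : (((x \ x') ∪ (x' \ x)).filter (fun ρ => a ∈ facets ρ)).card
      = ((x \ x').filter (fun ρ => a ∈ facets ρ)).card
      + ((x' \ x).filter (fun ρ => a ∈ facets ρ)).card := by
    rw [filter_union, card_union_of_disjoint (disjoint_filter_filter hd3)]
  have h4 : (x ∩ x').filter (fun ρ => a ∈ facets ρ)
      = (x' ∩ x).filter (fun ρ => a ∈ facets ρ) := by rw [inter_comm]
  have ha := hx a
  have ha' := hx' a
  rw [Nat.not_odd_iff_even, Nat.even_iff] at ha ha'
  rw [Nat.not_odd_iff_even, Nat.even_iff]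
  rw [h4] at h1
  omega

/-- Forward switch, birth–birth case.  In the filtration
`K ↪ K∪{σ} ↪ K∪{σ,τ}` (with `σ ⊄ τ`, `σ ≠ τ`), suppose both additions are births:
there is a cycle `x ⊆ K∪{σ}` with `σ ∈ x` and a cycle `x' ⊆ K∪{σ,τ}` with `τ ∈ x'`.
Then in the switched filtration `K ↪ K∪{τ} ↪ K∪{σ,τ}` both additions are births:
there is a cycle `y ⊆ K∪{τ}` with `τ ∈ y` and a cycle `y' ⊆ K∪{σ,τ}` with `σ ∈ y'`. -/
theorem stmt2 {V : Type} [DecidableEq V] (K : Finset (Finset V)) (σ τ : Finset V)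
    (hK : IsComplex K) (hσ : σ ∉ K) (hτ : τ ∉ K) (hne : σ ≠ τ) (hsub : ¬ σ ⊆ τ)
    (hKσ : IsComplex (insert σ K)) (hKτ : IsComplex (insert τ K))
    (hKστ : IsComplex (insert τ (insert σ K))) (p : ℕ)
    (x x' : Finset (Finset V))
    (hx : IsCycleIn (insert σ K) (p + 1) x) (hσx : σ ∈ x)
    (hx' : IsCycleIn (insert τ (insert σ K)) (p + 1) x') (hτx' : τ ∈ x') :
    (∃ y, IsCycleIn (insert τ K) (p + 1) y ∧ τ ∈ y) ∧
    (∃ y', IsCycleIn (insert τ (insert σ K)) (p + 1) y' ∧ σ ∈ y') := by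
  obtain ⟨⟨hxsub, hxcard⟩, hxbd⟩ := hx
  obtain ⟨⟨hx'sub, hx'card⟩, hx'bd⟩ := hx'
  have hτnx : τ ∉ x := by
    intro h
    rcases mem_insert.mp (hxsub h) with h' | h'
    · exact hne h'.symm
    · exact hτ h'
  constructor
  · by_cases hσx' : σ ∈ x'
    · -- y = (x \ x') ∪ (x' \ x)
      refine ⟨(x \ x') ∪ (x' \ x), ⟨⟨?_, ?_⟩, bd_sdiff_union hxbd hx'bd⟩, ?_⟩
      · intro ρ hρ
        rcases mem_union.mp hρ with h | h
        · have h1 := mem_sdiff.mp h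
          rcases mem_insert.mp (hxsub h1.1) with h' | h'
          · exact absurd (h' ▸ hσx') h1.2
          · exact mem_insert_of_mem h'
        · have h1 := mem_sdiff.mp h
          rcases mem_insert.mp (hx'sub h1.1) with h' | h'
          · exact h' ▸ mem_insert_self _ _
          · rcases mem_insert.mp h' with h'' | h''
            · exact absurd (h'' ▸ hσx) h1.2
            · exact mem_insert_of_mem h''
      · intro ρ hρ
        rcases mem_union.mp hρ with h | h
        · exact hxcard ρ (mem_sdiff.mp h).1
        · exact hx'card ρ (mem_sdiff.mp h).1
      · exact mem_union_right _ (mem_sdiff.mpr ⟨hτx', hτnx⟩)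
    · -- y = x'
      refine ⟨x', ⟨⟨?_, hx'card⟩, hx'bd⟩, hτx'⟩
      intro ρ hρ
      rcases mem_insert.mp (hx'sub hρ) with h | h
      · exact h ▸ mem_insert_self _ _
      · rcases mem_insert.mp h with h' | h'
        · exact absurd (h' ▸ hρ) hσx'
        · exact mem_insert_of_mem h'
  · exact ⟨x, ⟨⟨fun ρ hρ => mem_insert_of_mem (hxsub hρ), hxcard⟩, hxbd⟩, hσx⟩
end

section
/- Every simplex-wise zigzag filtration of finite simplicial complexes starting and ending with the empty complex can be transformed into the empty filtration by a finite sequence of the eight atomic operations: forward switch, backward switch, outward switch, inward switch, outward expansion, outward contraction, inward expansion, inward contraction. Consequently, any two such filtrations are connected by a finite sequence of atomic operations. -/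
open Finset

variable {V : Type} [DecidableEq V]

/-- One step of a simplex-wise zigzag filtration: the next complex is obtained by
adding or deleting exactly one simplex. -/
def SimplexwiseStep (K K' : Finset (Finset V)) : Prop :=
  (∃ σ ∉ K, K' = insert σ K) ∨ (∃ σ ∉ K', K = insert σ K')

/-- A simplex-wise zigzag filtration starting and ending with the empty complex,
given as the list of its complexes. -/
def ValidFilt (F : List (Finset (Finset V))) : Prop :=
  F ≠ [] ∧ F.head? = some ∅ ∧ F.getLast? = some ∅ ∧
  (∀ K ∈ F, IsComplex K) ∧ F.Chain' SimplexwiseStep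

/-- Forward switch: interchange two consecutive simplex additions
`↪σ ↪τ ⇝ ↪τ ↪σ` (requires `σ ⊄ τ`). -/
def ForwardSwitch (F F' : List (Finset (Finset V))) : Prop :=
  ∃ (pre post : List (Finset (Finset V))) (A : Finset (Finset V)) (σ τ : Finset V),
    σ ∉ A ∧ τ ∉ A ∧ σ ≠ τ ∧ ¬ σ ⊆ τ ∧
    F = pre ++ A :: insert σ A :: insert τ (insert σ A) :: post ∧
    F' = pre ++ A :: insert τ A :: insert τ (insert σ A) :: post

/-- Backward switch: interchange two consecutive simplex deletions
`↩σ ↩τ ⇝ ↩τ ↩σ` (requires `τ ⊄ σ`). -/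
def BackwardSwitch (F F' : List (Finset (Finset V))) : Prop :=
  ∃ (pre post : List (Finset (Finset V))) (A : Finset (Finset V)) (σ τ : Finset V),
    σ ∉ A ∧ τ ∉ A ∧ σ ≠ τ ∧ ¬ τ ⊆ σ ∧
    F = pre ++ insert τ (insert σ A) :: insert τ A :: A :: post ∧
    F' = pre ++ insert τ (insert σ A) :: insert σ A :: A :: post

/-- Outward switch: `↪σ ↩τ ⇝ ↩τ ↪σ` (requires `σ ≠ τ`). -/
def OutwardSwitch (F F' : List (Finset (Finset V))) : Prop :=
  ∃ (pre post : List (Finset (Finset V))) (N : Finset (Finset V)) (σ τ : Finset V),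
    σ ∉ N ∧ τ ∉ N ∧ σ ≠ τ ∧
    F = pre ++ insert τ N :: insert σ (insert τ N) :: insert σ N :: post ∧
    F' = pre ++ insert τ N :: N :: insert σ N :: post

/-- Inward switch: `↩σ ↪τ ⇝ ↪τ ↩σ` (requires `σ ≠ τ`). -/
def InwardSwitch (F F' : List (Finset (Finset V))) : Prop :=
  ∃ (pre post : List (Finset (Finset V))) (N : Finset (Finset V)) (σ τ : Finset V),
    σ ∉ N ∧ τ ∉ N ∧ σ ≠ τ ∧
    F = pre ++ insert σ N :: N :: insert τ N :: post ∧
    F' = pre ++ insert σ N :: insert τ (insert σ N) :: insert τ N :: post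

/-- Outward expansion: replace a complex `K` (with `σ ∈ K` having no proper
cofaces) by `K ↩σ K∖{σ} ↪σ K`. -/
def OutwardExpansion (F F' : List (Finset (Finset V))) : Prop :=
  ∃ (pre post : List (Finset (Finset V))) (K : Finset (Finset V)) (σ : Finset V),
    σ ∈ K ∧ (∀ τ ∈ K, σ ⊆ τ → τ = σ) ∧
    F = pre ++ K :: post ∧
    F' = pre ++ K :: K.erase σ :: K :: post

/-- Outward contraction: the reverse of outward expansion. -/
def OutwardContraction (F F' : List (Finset (Finset V))) : Prop :=
  OutwardExpansion F' F

/-- Inward expansion: replace a complex `K` (with `σ ∉ K` and every proper face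
of `σ` in `K`) by `K ↪σ K∪{σ} ↩σ K`. -/
def InwardExpansion (F F' : List (Finset (Finset V))) : Prop :=
  ∃ (pre post : List (Finset (Finset V))) (K : Finset (Finset V)) (σ : Finset V),
    σ ∉ K ∧ σ.Nonempty ∧ (∀ τ, τ ⊂ σ → τ.Nonempty → τ ∈ K) ∧
    F = pre ++ K :: post ∧
    F' = pre ++ K :: insert σ K :: K :: post

/-- Inward contraction: the reverse of inward expansion. -/
def InwardContraction (F F' : List (Finset (Finset V))) : Prop :=
  InwardExpansion F' F

/-- The eight atomic update operations on zigzag filtrations. -/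
def Atomic (F F' : List (Finset (Finset V))) : Prop :=
  ForwardSwitch F F' ∨ BackwardSwitch F F' ∨ OutwardSwitch F F' ∨ InwardSwitch F F' ∨
  OutwardExpansion F F' ∨ OutwardContraction F F' ∨
  InwardExpansion F F' ∨ InwardContraction F F'

/-- Total number of simplices in a filtration, the termination measure. -/
private def mu (F : List (Finset (Finset V))) : ℕ := (F.map Finset.card).sum

/-- In a zigzag whose first step is an addition and which ends at `∅`,
there is a peak: an addition immediately followed by a deletion. -/
private lemma peak_aux : ∀ (L : List (Finset (Finset V))) (A : Finset (Finset V)) (σ : Finset V),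
    List.Chain' SimplexwiseStep (A :: L) → L.getLast? = some ∅ → σ ∉ A →
    L.head? = some (insert σ A) →
    ∃ pre X Y Z post, A :: L = pre ++ X :: Y :: Z :: post ∧
      (∃ a ∉ X, Y = insert a X) ∧ (∃ b ∉ Z, Y = insert b Z) := by
  intro L
  induction L with
  | nil => simp
  | cons B M ih =>
    intro A σ hch hlast hσ hhead
    have hB : B = insert σ A := by simpa using hhead
    subst hB
    cases M with
    | nil =>
      simp at hlast
    | cons C M' =>
      have hBC : SimplexwiseStep (insert σ A) C := (List.isChain_cons_cons.mp hch.tail).1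
      rcases hBC with ⟨a, ha, hC⟩ | ⟨b, hb, hBe⟩
      · obtain ⟨pre, X, Y, Z, post, hsp, h1, h2⟩ :=
          ih (insert σ A) a hch.tail
            (by rwa [List.getLast?_cons_cons] at hlast) ha (by simp [hC])
        exact ⟨A :: pre, X, Y, Z, post, by rw [List.cons_append, ← hsp], h1, h2⟩
      · exact ⟨[], A, insert σ A, C, M', rfl, ⟨σ, hσ, rfl⟩, ⟨b, hb, hBe⟩⟩

private lemma reduce : ∀ (n : ℕ) (F : List (Finset (Finset V))), mu F ≤ n → ValidFilt F →
    Relation.ReflTransGen Atomic F [(∅ : Finset (Finset V))] := by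
  intro n
  induction n using Nat.strong_induction_on with
  | _ n ih =>
  intro F hmun hF
  obtain ⟨hne, hhead, hlast, hcplx, hch⟩ := hF
  cases F with
  | nil => exact absurd rfl hne
  | cons H L =>
    have hH : H = ∅ := by simpa using hhead
    subst hH
    cases L with
    | nil => exact Relation.ReflTransGen.refl
    | cons B M =>
      have hstep : SimplexwiseStep ∅ B := (List.isChain_cons_cons.mp hch).1
      obtain ⟨σ, hσ, hB⟩ : ∃ σ ∉ (∅ : Finset (Finset V)), B = insert σ ∅ := by
        rcases hstep with ⟨σ, h1, h2⟩ | ⟨σ, h1, h2⟩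
        · exact ⟨σ, h1, h2⟩
        · exact absurd h2.symm (Finset.insert_ne_empty _ _)
      obtain ⟨pre, X, Y, Z, post, hsp, ⟨a, haX, hYa⟩, ⟨b, hbZ, hYb⟩⟩ :=
        peak_aux (B :: M) ∅ σ hch
          (by rwa [List.getLast?_cons_cons] at hlast) hσ (by simp [hB])
      rw [hsp] at hch hcplx hmun hhead hlast ⊢
      clear hsp hB hstep hσ hne
      have hXmem : X ∈ pre ++ X :: Y :: Z :: post := by simp
      have hYmem : Y ∈ pre ++ X :: Y :: Z :: post := by simp
      have hZmem : Z ∈ pre ++ X :: Y :: Z :: post := by simp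
      have hXc : IsComplex X := hcplx X hXmem
      have hYc : IsComplex Y := hcplx Y hYmem
      have hZc : IsComplex Z := hcplx Z hZmem
      have haY : a ∈ Y := hYa ▸ Finset.mem_insert_self a X
      obtain ⟨hcpre, hcmid, hlink⟩ := List.isChain_append.mp hch
      have hZpost : List.Chain' SimplexwiseStep (Z :: post) := hcmid.tail.tail
      by_cases hab : a = b
      · -- inward contraction
        subst hab
        have hXZ : X = Z := by
          rw [← Finset.erase_insert haX, ← hYa, hYb, Finset.erase_insert hbZ]
        have hat : Atomic (pre ++ X :: Y :: Z :: post) (pre ++ X :: post) := by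
          refine Or.inr (Or.inr (Or.inr (Or.inr (Or.inr (Or.inr (Or.inr ?_))))))
          refine ⟨pre, post, X, a, haX, hYc.1 a haY, ?_, rfl, ?_⟩
          · intro τ hτ hτne
            have hτY : τ ∈ Y := hYc.2 a haY τ hτ.subset hτne
            rw [hYa, Finset.mem_insert] at hτY
            rcases hτY with h | h
            · exact absurd h (ne_of_ssubset hτ)
            · exact h
          · rw [hYa, ← hXZ]
        have hv' : ValidFilt (pre ++ X :: post) := by
          refine ⟨by simp, ?_, ?_, ?_, ?_⟩
          · cases pre with
            | nil =>
              have hX : X = ∅ := by simpa using hhead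
              simp [hX]
            | cons p ps => simpa using hhead
          · rw [List.getLast?_append] at hlast ⊢
            cases post with
            | nil =>
              simp only [List.getLast?_cons_cons] at hlast
              simpa [hXZ] using hlast
            | cons q qs =>
              simp only [List.getLast?_cons_cons] at hlast ⊢
              exact hlast
          · intro K hK
            apply hcplx
            simp only [List.mem_append, List.mem_cons] at hK ⊢
            tauto
          · refine List.isChain_append.mpr ⟨hcpre, ?_, ?_⟩
            · rw [hXZ]; exact hZpost
            · intro x hx y hy
              simp only [List.head?_cons, Option.mem_some_iff] at hy
              subst hy
              exact hlink x hx X (by simp)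
        have hm : mu (pre ++ X :: post) < n := by
          have h1 : 1 ≤ Y.card := Finset.card_pos.mpr ⟨a, haY⟩
          simp only [mu, List.map_append, List.sum_append, List.map_cons,
            List.sum_cons] at hmun ⊢
          omega
        exact Relation.ReflTransGen.head hat (ih _ hm _ le_rfl hv')
      · -- outward switch
        have hbX : b ∈ X := by
          have hbY : b ∈ Y := hYb ▸ Finset.mem_insert_self b Z
          rw [hYa, Finset.mem_insert] at hbY
          rcases hbY with h | h
          · exact absurd h.symm hab
          · exact h
        set N := X.erase b with hN
        have haN : a ∉ N := fun h => haX (Finset.mem_of_mem_erase h)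
        have hbN : b ∉ N := Finset.notMem_erase b X
        have hXN : X = insert b N := (Finset.insert_erase hbX).symm
        have hZYb : Z = Y.erase b := by rw [hYb, Finset.erase_insert hbZ]
        have hZN : Z = insert a N := by
          rw [hZYb, hYa, hN]
          ext x
          simp only [Finset.mem_erase, Finset.mem_insert]
          constructor
          · rintro ⟨hxb, hx | hx⟩
            · exact Or.inl hx
            · exact Or.inr ⟨hxb, hx⟩
          · rintro (rfl | ⟨hxb, hx⟩)
            · exact ⟨fun h => hab h, Or.inl rfl⟩
            · exact ⟨hxb, Or.inr hx⟩
        have hNc : IsComplex N := by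
          constructor
          · intro ρ hρ
            exact hXc.1 ρ (Finset.mem_of_mem_erase hρ)
          · intro ρ hρ π hπ hπne
            have hρX : ρ ∈ X := Finset.mem_of_mem_erase hρ
            have hπX : π ∈ X := hXc.2 ρ hρX π hπ hπne
            refine Finset.mem_erase.mpr ⟨?_, hπX⟩
            rintro rfl
            have hρZ : ρ ∈ Z := by
              have hρY : ρ ∈ Y := hYa ▸ Finset.mem_insert_of_mem hρX
              rw [hYb, Finset.mem_insert] at hρY
              rcases hρY with h | h
              · exact absurd h (Finset.mem_erase.mp hρ).1
              · exact h
            exact hbZ (hZc.2 ρ hρZ π hπ hπne)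
        have hat : Atomic (pre ++ X :: Y :: Z :: post) (pre ++ X :: N :: Z :: post) := by
          refine Or.inr (Or.inr (Or.inl ?_))
          refine ⟨pre, post, N, a, b, haN, hbN, hab, ?_, ?_⟩
          · rw [hYa, hZN, hXN]
          · rw [hZN, hXN]
        have hstepXN : SimplexwiseStep X N := Or.inr ⟨b, hbN, hXN⟩
        have hstepNZ : SimplexwiseStep N Z := Or.inl ⟨a, haN, hZN⟩
        have hv' : ValidFilt (pre ++ X :: N :: Z :: post) := by
          refine ⟨by simp, ?_, ?_, ?_, ?_⟩
          · cases pre with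
            | nil => simpa using hhead
            | cons p ps => simpa using hhead
          · rw [List.getLast?_append] at hlast ⊢
            simp only [List.getLast?_cons_cons] at hlast ⊢
            exact hlast
          · intro K hK
            simp only [List.mem_append, List.mem_cons] at hK
            rcases hK with h | h | h | h | h
            · exact hcplx K (by simp [h])
            · exact h ▸ hXc
            · exact h ▸ hNc
            · exact h ▸ hZc
            · exact hcplx K (by simp [h])
          · refine List.isChain_append.mpr ⟨hcpre, ?_, ?_⟩
            · exact List.isChain_cons_cons.mpr ⟨hstepXN, List.isChain_cons_cons.mpr ⟨hstepNZ, hZpost⟩⟩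
            · intro x hx y hy
              simp only [List.head?_cons, Option.mem_some_iff] at hy
              subst hy
              exact hlink x hx X (by simp)
        have hm : mu (pre ++ X :: N :: Z :: post) < n := by
          have h1 : N.card < X.card := Finset.card_lt_card (Finset.erase_ssubset hbX)
          have h2 : X.card < Y.card := by
            rw [hYa]; exact Finset.card_lt_card (Finset.ssubset_insert haX)
          simp only [mu, List.map_append, List.sum_append, List.map_cons,
            List.sum_cons] at hmun ⊢
          omega
        exact Relation.ReflTransGen.head hat (ih _ hm _ le_rfl hv')

/-- Universality of the atomic operations: every simplex-wise zigzag filtration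
starting and ending with the empty complex can be transformed into the empty
filtration by a finite sequence of atomic operations; consequently, any two such
filtrations are connected by a finite sequence of atomic operations (applied in
either direction). -/
theorem stmt13 {V : Type} [DecidableEq V] :
    (∀ F : List (Finset (Finset V)), ValidFilt F →
      Relation.ReflTransGen Atomic F [(∅ : Finset (Finset V))]) ∧
    (∀ F₁ F₂ : List (Finset (Finset V)), ValidFilt F₁ → ValidFilt F₂ →
      Relation.ReflTransGen (fun G G' => Atomic G G' ∨ Atomic G' G) F₁ F₂) := by
  have part1 : ∀ F : List (Finset (Finset V)), ValidFilt F →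
      Relation.ReflTransGen Atomic F [(∅ : Finset (Finset V))] :=
    fun F hF => reduce (mu F) F le_rfl hF
  refine ⟨part1, fun F₁ F₂ h₁ h₂ => ?_⟩
  have g₁ := Relation.ReflTransGen.mono (fun a b h => Or.inl h :
    ∀ a b, Atomic a b → Atomic a b ∨ Atomic b a) _ _ (part1 F₁ h₁)
  have g₂ := Relation.ReflTransGen.mono (fun a b h => Or.inl h :
    ∀ a b, Atomic a b → Atomic a b ∨ Atomic b a) _ _ (part1 F₂ h₂)
  have sym : Symmetric (fun G G' : List (Finset (Finset V)) => Atomic G G' ∨ Atomic G' G) :=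
    fun a b h => h.symm
  haveI : Std.Symm (fun G G' : List (Finset (Finset V)) => Atomic G G' ∨ Atomic G' G) := ⟨sym⟩
  exact g₁.trans (Relation.ReflTransGen.symmetric.symm _ _ g₂)
end

section
/- Any simplex-wise zigzag filtration ∅ = K_0 ↔ ... ↔ K_m = ∅ can be transformed, using only inward switches and outward contractions, into an up-down filtration ∅ = L_0 ↪ ... ↪ L_n ↩ ... ↩ L_{2n} = ∅ in which all additions precede all deletions. -/
open Finset

variable {V : Type} [DecidableEq V]

/-- A filtration is up-down if all simplex additions precede all deletions. -/
def UpDown (F : List (Finset (Finset V))) : Prop :=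
  ∃ n, ∀ i, i + 1 < F.length →
    (i < n → ∃ σ ∉ F.getD i ∅, F.getD (i + 1) ∅ = insert σ (F.getD i ∅)) ∧
    (n ≤ i → ∃ σ ∉ F.getD (i + 1) ∅, F.getD i ∅ = insert σ (F.getD (i + 1) ∅))


section ZigzagAux

variable {V : Type} [DecidableEq V]

/-- Inversion count of a boolean step sequence (`false` = deletion, `true` = addition):
number of pairs (deletion, later addition). -/
def invc : List Bool → ℕ
  | [] => 0
  | b :: l => (if b then 0 else l.count true) + invc l

lemma invc_switch (X Y : List Bool) :
    invc (X ++ false :: true :: Y) = invc (X ++ true :: false :: Y) + 1 := by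
  induction X with
  | nil => simp [invc, List.count_cons] <;> omega
  | cons x X ih =>
      simp only [List.cons_append, invc, List.count_append, List.count_cons, ih]
      cases x <;> simp <;> omega

lemma invc_drop (X Y : List Bool) : invc (X ++ Y) < invc (X ++ false :: true :: Y) := by
  induction X with
  | nil => simp [invc, List.count_cons] <;> omega
  | cons x X ih =>
      simp only [List.cons_append, invc, List.count_append, List.count_cons]
      cases x <;> simp <;> omega

/-- The step sequence of a filtration: `true` for an addition, `false` for a deletion. -/
def steps : List (Finset (Finset V)) → List Bool
  | a :: b :: l => decide (a.card < b.card) :: steps (b :: l)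
  | _ => []

lemma steps_append_cons (l : List (Finset (Finset V))) (a : Finset (Finset V))
    (r : List (Finset (Finset V))) :
    steps (l ++ a :: r) = steps (l ++ [a]) ++ steps (a :: r) := by
  induction l with
  | nil => simp [steps]
  | cons x l ih =>
      cases l with
      | nil => simp [steps]
      | cons y l' =>
          simp only [List.cons_append, steps, List.append_eq] at *
          rw [ih]

lemma list_decomp {α : Type*} (F : List α) (d : α) (i : ℕ) (h : i + 2 < F.length) :
    F = F.take i ++ F.getD i d :: F.getD (i+1) d :: F.getD (i+2) d :: F.drop (i+3) := by
  have h0 : i < F.length := by omega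
  have h1 : i + 1 < F.length := by omega
  conv_lhs => rw [← List.take_append_drop i F]
  rw [List.drop_eq_getElem_cons h0, List.drop_eq_getElem_cons h1,
    List.drop_eq_getElem_cons h, List.getD_eq_getElem F d h0,
    List.getD_eq_getElem F d h1, List.getD_eq_getElem F d h]

/-- Addition step at index `i`. -/
def AddAt (F : List (Finset (Finset V))) (i : ℕ) : Prop :=
  ∃ σ ∉ F.getD i ∅, F.getD (i + 1) ∅ = insert σ (F.getD i ∅)

/-- Deletion step at index `i`. -/
def DelAt (F : List (Finset (Finset V))) (i : ℕ) : Prop :=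
  ∃ σ ∉ F.getD (i + 1) ∅, F.getD i ∅ = insert σ (F.getD (i + 1) ∅)

lemma step_or {F : List (Finset (Finset V))} (hF : F.Chain' SimplexwiseStep)
    {i : ℕ} (h : i + 1 < F.length) : AddAt F i ∨ DelAt F i := by
  rw [List.Chain', List.isChain_iff_getElem] at hF
  have := hF i (by omega)
  rw [AddAt, DelAt, List.getD_eq_getElem F ∅ (by omega : i < F.length),
    List.getD_eq_getElem F ∅ h]
  simpa [SimplexwiseStep, List.get_eq_getElem] using this

lemma exists_move (F : List (Finset (Finset V))) (hF : ValidFilt F) (i : ℕ)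
    (h2 : i + 2 < F.length) (hdel : DelAt F i) (hadd : AddAt F (i + 1)) :
    ∃ F', (InwardSwitch F F' ∨ OutwardContraction F F') ∧ ValidFilt F' ∧
      invc (steps F') < invc (steps F) := by
  obtain ⟨hne, hhead, hlast, hcplx, hchain⟩ := hF
  obtain ⟨σ, hσB, hA⟩ := hdel
  obtain ⟨τ, hτB, hC⟩ := hadd
  set pre := F.take i with hpre
  set post := F.drop (i + 3) with hpost
  set A := F.getD i ∅ with hAd
  set B := F.getD (i + 1) ∅ with hBd
  set C := F.getD (i + 2) ∅ with hCd
  have hFd : F = pre ++ A :: B :: C :: post := list_decomp F ∅ i h2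
  clear_value pre post A B C
  have hAmem : A ∈ F := by rw [hFd]; simp
  have hBmem : B ∈ F := by rw [hFd]; simp
  have hCmem : C ∈ F := by rw [hFd]; simp
  have hcardA : A.card = B.card + 1 := by rw [hA]; exact Finset.card_insert_of_notMem hσB
  have hcardC : C.card = B.card + 1 := by rw [hC]; exact Finset.card_insert_of_notMem hτB
  rw [hFd] at hhead hlast
  have hchain' := hchain
  rw [hFd, List.Chain', List.isChain_append] at hchain'
  obtain ⟨hcpre, hcmid, hlink⟩ := hchain'
  rw [List.isChain_cons_cons, List.isChain_cons_cons] at hcmid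
  obtain ⟨hRAB, hRBC, hcpost⟩ := hcmid
  have hX : steps F = steps (pre ++ [A]) ++ false :: true :: steps (C :: post) := by
    rw [hFd, steps_append_cons]
    congr 1
    show steps (A :: B :: C :: post) = _
    simp only [steps]
    rw [decide_eq_false (by omega : ¬ A.card < B.card),
      decide_eq_true (by omega : B.card < C.card)]
  by_cases hst : σ = τ
  · -- outward contraction
    subst hst
    have hAC : A = C := by rw [hA, hC]
    refine ⟨pre ++ A :: post, Or.inr ?_, ⟨by simp, ?_, ?_, ?_, ?_⟩, ?_⟩
    · -- OutwardContraction
      refine ⟨pre, post, A, σ, by rw [hA]; exact Finset.mem_insert_self _ _, ?_, rfl, ?_⟩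
      · intro ρ hρ hsub
        by_contra hne'
        have hρB : ρ ∈ B := by
          rw [hA] at hρ
          rcases Finset.mem_insert.mp hρ with h | h
          · exact absurd h hne'
          · exact h
        have hσne : σ.Nonempty :=
          (hcplx A hAmem).1 σ (by rw [hA]; exact Finset.mem_insert_self _ _)
        exact hσB ((hcplx B hBmem).2 ρ hρB σ hsub hσne)
      · have hB : A.erase σ = B := by rw [hA]; exact Finset.erase_insert hσB
        rw [hFd, hB, hAC]
    · -- head?
      cases pre with
      | nil => simpa using hhead
      | cons p ps => simpa using hhead
    · -- getLast?
      rw [List.getLast?_append_cons, List.getLast?_cons_cons,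
        List.getLast?_cons_cons] at hlast
      rw [List.getLast?_append_cons, hAC]
      exact hlast
    · -- complexes
      intro K hK
      apply hcplx
      rw [hFd]
      simp only [List.mem_append, List.mem_cons] at hK ⊢
      tauto
    · -- chain'
      rw [List.Chain', List.isChain_append]
      refine ⟨hcpre, by rw [hAC]; exact hcpost, ?_⟩
      simpa using hlink
    · -- measure
      have hX' : steps (pre ++ A :: post) = steps (pre ++ [A]) ++ steps (C :: post) := by
        rw [steps_append_cons]
        congr 1
        rw [hAC]
      rw [hX', hX]
      exact invc_drop _ _
  · -- inward switch
    have hτA : τ ∉ A := by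
      rw [hA, Finset.mem_insert]
      rintro (h | h)
      · exact hst h.symm
      · exact hτB h
    have hσC : σ ∉ C := by
      rw [hC, Finset.mem_insert]
      rintro (h | h)
      · exact hst h
      · exact hσB h
    have hB'C : insert τ A = insert σ C := by rw [hA, hC, Finset.insert_comm]
    refine ⟨pre ++ A :: insert τ A :: C :: post, Or.inl ?_, ⟨by simp, ?_, ?_, ?_, ?_⟩, ?_⟩
    · -- InwardSwitch
      refine ⟨pre, post, B, σ, τ, hσB, hτB, hst, ?_, ?_⟩
      · rw [← hA, ← hC]; exact hFd
      · rw [← hA, ← hC]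
    · -- head?
      cases pre with
      | nil => simpa using hhead
      | cons p ps => simpa using hhead
    · -- getLast?
      rw [List.getLast?_append_cons, List.getLast?_cons_cons,
        List.getLast?_cons_cons] at hlast ⊢
      exact hlast
    · -- complexes
      intro K hK
      simp only [List.mem_append, List.mem_cons] at hK
      rcases hK with h | h | h | h | h
      · exact hcplx K (by rw [hFd]; simp [h])
      · exact hcplx K (by rw [hFd]; simp [h])
      · -- K = insert τ A
        subst h
        constructor
        · intro ρ hρ
          rcases Finset.mem_insert.mp hρ with rfl | hρA
          · exact (hcplx C hCmem).1 ρ (by rw [hC]; exact Finset.mem_insert_self _ _)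
          · exact (hcplx A hAmem).1 ρ hρA
        · intro ρ hρ τ' hsub hne'
          rcases Finset.mem_insert.mp hρ with rfl | hρA
          · have hρC : ρ ∈ C := by rw [hC]; exact Finset.mem_insert_self _ _
            have hτ'C := (hcplx C hCmem).2 ρ hρC τ' hsub hne'
            rw [hC] at hτ'C
            rcases Finset.mem_insert.mp hτ'C with rfl | hτ'B
            · exact Finset.mem_insert_self _ _
            · exact Finset.mem_insert_of_mem (by rw [hA]; exact Finset.mem_insert_of_mem hτ'B)
          · exact Finset.mem_insert_of_mem ((hcplx A hAmem).2 ρ hρA τ' hsub hne')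
      · exact hcplx K (by rw [hFd]; simp [h])
      · exact hcplx K (by rw [hFd]; simp [h])
    · -- chain'
      rw [List.Chain', List.isChain_append]
      refine ⟨hcpre, ?_, by simpa using hlink⟩
      rw [List.isChain_cons_cons, List.isChain_cons_cons]
      exact ⟨Or.inl ⟨τ, hτA, rfl⟩, Or.inr ⟨σ, hσC, hB'C⟩, hcpost⟩
    · -- measure
      have hcardB' : (insert τ A).card = A.card + 1 := Finset.card_insert_of_notMem hτA
      have hX' : steps (pre ++ A :: insert τ A :: C :: post) =
          steps (pre ++ [A]) ++ true :: false :: steps (C :: post) := by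
        rw [steps_append_cons]
        congr 1
        show steps (A :: insert τ A :: C :: post) = _
        simp only [steps]
        rw [decide_eq_true (by omega : A.card < (insert τ A).card),
          decide_eq_false (by omega : ¬ (insert τ A).card < C.card)]
      rw [hX', hX, invc_switch]
      exact Nat.lt_succ_self _

lemma updown_of_no_pattern (F : List (Finset (Finset V)))
    (hc : F.Chain' SimplexwiseStep)
    (h : ∀ i, i + 2 < F.length → ¬(DelAt F i ∧ AddAt F (i + 1))) : UpDown F := by
  classical
  by_cases hD : ∃ i, i + 1 < F.length ∧ DelAt F i
  · set n := Nat.find hD with hn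
    have hspec := Nat.find_spec hD
    have claim : ∀ k, n + k + 1 < F.length → DelAt F (n + k) := by
      intro k
      induction k with
      | zero => intro _; simpa using hspec.2
      | succ k ih =>
          intro hk
          have hdk := ih (by omega)
          have hnp := h (n + k) (by omega)
          rcases step_or hc (show (n + k + 1) + 1 < F.length by omega) with ha | hd
          · exact absurd ⟨hdk, ha⟩ hnp
          · exact hd
    refine ⟨n, fun i hi => ⟨?_, ?_⟩⟩
    · intro hin
      have hmin := Nat.find_min hD hin
      rcases step_or hc hi with ha | hd
      · exact ha
      · exact absurd ⟨hi, hd⟩ hmin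
    · intro hni
      have hc' := claim (i - n) (by omega)
      have heq : n + (i - n) = i := by omega
      rwa [heq] at hc'
  · refine ⟨F.length, fun i hi => ⟨?_, ?_⟩⟩
    · intro _
      rcases step_or hc hi with ha | hd
      · exact ha
      · exact absurd ⟨i, hi, hd⟩ hD
    · intro hni
      exfalso
      omega

lemma main_aux : ∀ (n : ℕ) (F : List (Finset (Finset V))), invc (steps F) < n →
    ValidFilt F →
    ∃ G, Relation.ReflTransGen
        (fun G₁ G₂ => InwardSwitch G₁ G₂ ∨ OutwardContraction G₁ G₂) F G ∧
      ValidFilt G ∧ UpDown G := by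
  intro n
  induction n with
  | zero => intro F h; exact absurd h (Nat.not_lt_zero _)
  | succ n ih =>
      intro F hlt hF
      by_cases hp : ∃ i, i + 2 < F.length ∧ DelAt F i ∧ AddAt F (i + 1)
      · obtain ⟨i, h2, hdel, hadd⟩ := hp
        obtain ⟨F', hmove, hF', hinv⟩ := exists_move F hF i h2 hdel hadd
        obtain ⟨G, hrel, hvG, hud⟩ := ih F' (by omega) hF'
        exact ⟨G, Relation.ReflTransGen.head hmove hrel, hvG, hud⟩
      · exact ⟨F, Relation.ReflTransGen.refl, hF,
          updown_of_no_pattern F hF.2.2.2.2 (fun i hi hda => hp ⟨i, hi, hda⟩)⟩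

end ZigzagAux

/-- Any simplex-wise zigzag filtration starting and ending with the empty complex
can be transformed, using only inward switches and outward contractions, into an
up-down filtration. -/
theorem stmt14 {V : Type} [DecidableEq V]
    (F : List (Finset (Finset V))) (hF : ValidFilt F) :
    ∃ G, Relation.ReflTransGen
        (fun G₁ G₂ => InwardSwitch G₁ G₂ ∨ OutwardContraction G₁ G₂) F G ∧
      ValidFilt G ∧ UpDown G := by
  exact main_aux (invc (steps F) + 1) F (Nat.lt_succ_self _) hF
end

section
/- Let ζ₁ be a p-th post-birth representative for [b, i] and ζ₂ a p-th pre-death representative for [i, d], and suppose their cycles at index i, z_i and z'_i, are homologous in K_i via z_i + z'_i = ∂A with A a (p+1)-chain of K_i. Then the concatenation ζ₁ ‖ ζ₂, obtained by replacing the chain c_{i−1} of ζ₁ by c_{i−1} + A and splicing to ζ₂, is a p-th representative sequence for [b, d]. -/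
open Finset

variable {V : Type} [DecidableEq V]

/-- There is a cycle of `L` (of the dimension of `σ`) containing `σ`;
equivalently, the addition of `σ` creating `L` is a birth. -/
def HasCycleWith (L : Finset (Finset V)) (σ : Finset V) : Prop :=
  ∃ z, IsCycleIn L σ.card z ∧ σ ∈ z

/-- `b` is a birth index of the filtration `F`: the arrow between `K_{b-1}` and
`K_b` is a forward addition which creates a class, or a backward deletion whose
reversed addition does not create a class (so the backward map is surjective). -/
def IsBirthIndex (F : List (Finset (Finset V))) (b : ℕ) : Prop :=
  1 ≤ b ∧ b < F.length ∧
  ((∃ σ ∉ F.getD (b - 1) ∅, F.getD b ∅ = insert σ (F.getD (b - 1) ∅) ∧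
      HasCycleWith (F.getD b ∅) σ) ∨
   (∃ σ ∉ F.getD b ∅, F.getD (b - 1) ∅ = insert σ (F.getD b ∅) ∧
      ¬ HasCycleWith (F.getD (b - 1) ∅) σ))

/-- `d` is a death index of the filtration `F`: the arrow between `K_d` and
`K_{d+1}` is a forward addition which kills a class, or a backward deletion of a
simplex lying in a cycle (so the backward map is injective). -/
def IsDeathIndex (F : List (Finset (Finset V))) (d : ℕ) : Prop :=
  d + 1 < F.length ∧
  ((∃ σ ∉ F.getD d ∅, F.getD (d + 1) ∅ = insert σ (F.getD d ∅) ∧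
      ¬ HasCycleWith (F.getD (d + 1) ∅) σ) ∨
   (∃ σ ∉ F.getD (d + 1) ∅, F.getD d ∅ = insert σ (F.getD (d + 1) ∅) ∧
      HasCycleWith (F.getD d ∅) σ))

open Classical in
/-- The set `P(F)` of birth indices of `F`. -/
noncomputable def BirthSet (F : List (Finset (Finset V))) : Finset ℕ :=
  (Finset.range F.length).filter (fun b => IsBirthIndex F b)

open Classical in
/-- The set `N(F)` of death indices of `F`. -/
noncomputable def DeathSet (F : List (Finset (Finset V))) : Finset ℕ :=
  (Finset.range F.length).filter (fun d => IsDeathIndex F d)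

/-- A `p`-th representative sequence for the interval `[b,d]` of the filtration
`F`: `p`-cycles `z i ⊆ K_i` for `b ≤ i ≤ d` and `(p+1)`-chains `c i` (in the
larger of `K_i`, `K_{i+1}`) with `z i + z (i+1) = ∂(c i)`, subject to the birth
condition at `b` and the death condition at `d` of Definition 2.2. -/
def RepSeq (F : List (Finset (Finset V))) (p b d : ℕ)
    (z c : ℕ → Finset (Finset V)) : Prop :=
  b ≤ d ∧
  (∀ i, b ≤ i → i ≤ d → IsCycleIn (F.getD i ∅) (p + 1) (z i)) ∧
  (∀ i, b ≤ i → i < d →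
    (F.getD i ∅ ⊆ F.getD (i + 1) ∅ →
      IsChainIn (F.getD (i + 1) ∅) (p + 2) (c i) ∧
      bd (c i) = symmDiff (z i) (z (i + 1))) ∧
    (F.getD (i + 1) ∅ ⊆ F.getD i ∅ →
      IsChainIn (F.getD i ∅) (p + 2) (c i) ∧
      bd (c i) = symmDiff (z i) (z (i + 1)))) ∧
  -- birth condition
  (∀ σ, σ ∉ F.getD b ∅ → F.getD (b - 1) ∅ = insert σ (F.getD b ∅) →
    IsChainIn (F.getD (b - 1) ∅) (p + 2) (c (b - 1)) ∧
    bd (c (b - 1)) = z b ∧ σ ∈ c (b - 1)) ∧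
  (∀ σ, σ ∉ F.getD (b - 1) ∅ → F.getD b ∅ = insert σ (F.getD (b - 1) ∅) →
    σ ∈ z b) ∧
  -- death condition
  (∀ σ, σ ∉ F.getD d ∅ → F.getD (d + 1) ∅ = insert σ (F.getD d ∅) →
    IsChainIn (F.getD (d + 1) ∅) (p + 2) (c d) ∧
    bd (c d) = z d ∧ σ ∈ c d) ∧
  (∀ σ, σ ∉ F.getD (d + 1) ∅ → F.getD d ∅ = insert σ (F.getD (d + 1) ∅) →
    σ ∈ z d)

/-- A `p`-th post-birth representative for `[b, i]`: a representative sequence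
satisfying the birth condition at `b`, with no condition at `i`. -/
def PostBirthRep (F : List (Finset (Finset V))) (p b i : ℕ)
    (z c : ℕ → Finset (Finset V)) : Prop :=
  b ≤ i ∧
  (∀ j, b ≤ j → j ≤ i → IsCycleIn (F.getD j ∅) (p + 1) (z j)) ∧
  (∀ j, b ≤ j → j < i →
    (F.getD j ∅ ⊆ F.getD (j + 1) ∅ →
      IsChainIn (F.getD (j + 1) ∅) (p + 2) (c j) ∧
      bd (c j) = symmDiff (z j) (z (j + 1))) ∧
    (F.getD (j + 1) ∅ ⊆ F.getD j ∅ →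
      IsChainIn (F.getD j ∅) (p + 2) (c j) ∧
      bd (c j) = symmDiff (z j) (z (j + 1)))) ∧
  (∀ σ, σ ∉ F.getD b ∅ → F.getD (b - 1) ∅ = insert σ (F.getD b ∅) →
    IsChainIn (F.getD (b - 1) ∅) (p + 2) (c (b - 1)) ∧
    bd (c (b - 1)) = z b ∧ σ ∈ c (b - 1)) ∧
  (∀ σ, σ ∉ F.getD (b - 1) ∅ → F.getD b ∅ = insert σ (F.getD (b - 1) ∅) →
    σ ∈ z b)

/-- A `p`-th pre-death representative for `[i, d]`: a representative sequence
satisfying the death condition at `d`, with no condition at `i`. -/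
def PreDeathRep (F : List (Finset (Finset V))) (p i d : ℕ)
    (z c : ℕ → Finset (Finset V)) : Prop :=
  i ≤ d ∧
  (∀ j, i ≤ j → j ≤ d → IsCycleIn (F.getD j ∅) (p + 1) (z j)) ∧
  (∀ j, i ≤ j → j < d →
    (F.getD j ∅ ⊆ F.getD (j + 1) ∅ →
      IsChainIn (F.getD (j + 1) ∅) (p + 2) (c j) ∧
      bd (c j) = symmDiff (z j) (z (j + 1))) ∧
    (F.getD (j + 1) ∅ ⊆ F.getD j ∅ →
      IsChainIn (F.getD j ∅) (p + 2) (c j) ∧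
      bd (c j) = symmDiff (z j) (z (j + 1)))) ∧
  (∀ σ, σ ∉ F.getD d ∅ → F.getD (d + 1) ∅ = insert σ (F.getD d ∅) →
    IsChainIn (F.getD (d + 1) ∅) (p + 2) (c d) ∧
    bd (c d) = z d ∧ σ ∈ c d) ∧
  (∀ σ, σ ∉ F.getD (d + 1) ∅ → F.getD d ∅ = insert σ (F.getD (d + 1) ∅) →
    σ ∈ z d)

/-- The birth order `b₁ ≺_b b₂`: either `b₁ < b₂` and the arrow into `K_{b₂}` is
forward, or `b₁ > b₂` and the arrow into `K_{b₁}` is backward. -/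
def BirthOrder (F : List (Finset (Finset V))) (b₁ b₂ : ℕ) : Prop :=
  (b₁ < b₂ ∧ F.getD (b₂ - 1) ∅ ⊆ F.getD b₂ ∅) ∨
  (b₂ < b₁ ∧ F.getD b₁ ∅ ⊆ F.getD (b₁ - 1) ∅)
section ConcatHelpers

lemma mem_bd {c : Finset (Finset V)} {τ : Finset V} :
    τ ∈ bd c ↔ Odd ((c.filter (fun ρ => τ ∈ facets ρ)).card) := by
  unfold bd
  simp only [Finset.mem_filter, Finset.mem_biUnion, and_iff_right_iff_imp]
  intro h
  obtain ⟨ρ, hρ⟩ := Finset.card_pos.mp h.pos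
  exact ⟨ρ, (Finset.mem_filter.mp hρ).1, (Finset.mem_filter.mp hρ).2⟩

lemma card_symmDiff' (a b : Finset (Finset V)) :
    (symmDiff a b).card + (a ∩ b).card + (a ∩ b).card = a.card + b.card := by
  have h1 : symmDiff a b = (a \ b) ∪ (b \ a) := by
    ext ρ; simp only [Finset.mem_symmDiff, Finset.mem_union, Finset.mem_sdiff]
  have hdisj : Disjoint (a \ b) (b \ a) := by
    apply Finset.disjoint_left.mpr; intro ρ h1 h2
    exact (Finset.mem_sdiff.mp h1).2 (Finset.mem_sdiff.mp h2).1
  rw [h1, Finset.card_union_of_disjoint hdisj]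
  have := Finset.card_sdiff_add_card_inter a b
  have h2 := Finset.card_sdiff_add_card_inter b a
  rw [Finset.inter_comm] at h2
  omega

lemma bd_symmDiff (x y : Finset (Finset V)) :
    bd (symmDiff x y) = symmDiff (bd x) (bd y) := by
  ext τ
  have hfs : (symmDiff x y).filter (fun ρ => τ ∈ facets ρ)
      = symmDiff (x.filter (fun ρ => τ ∈ facets ρ)) (y.filter (fun ρ => τ ∈ facets ρ)) := by
    ext ρ; simp only [Finset.mem_filter, Finset.mem_symmDiff]; tauto
  simp only [Finset.mem_symmDiff, mem_bd]
  rw [hfs]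
  have := card_symmDiff' (x.filter (fun ρ => τ ∈ facets ρ)) (y.filter (fun ρ => τ ∈ facets ρ))
  rw [Nat.odd_iff, Nat.odd_iff, Nat.odd_iff]
  omega

lemma myIsChainIn_symmDiff {L : Finset (Finset V)} {d : ℕ} {x y : Finset (Finset V)}
    (hx : IsChainIn L d x) (hy : IsChainIn L d y) : IsChainIn L d (symmDiff x y) := by
  constructor
  · intro ρ hρ
    rcases Finset.mem_symmDiff.mp hρ with ⟨h, _⟩ | ⟨h, _⟩
    exacts [hx.1 h, hy.1 h]
  · intro ρ hρ
    rcases Finset.mem_symmDiff.mp hρ with ⟨h, _⟩ | ⟨h, _⟩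
    exacts [hx.2 ρ h, hy.2 ρ h]

lemma myComplex_getD (F : List (Finset (Finset V))) (hF : ValidFilt F) (n : ℕ) :
    IsComplex (F.getD n ∅) := by
  by_cases h : n < F.length
  · exact hF.2.2.2.1 _ (by rw [List.getD_eq_getElem _ _ h]; exact List.getElem_mem h)
  · rw [List.getD_eq_default _ _ (le_of_not_gt h)]
    exact ⟨fun σ h => absurd h (Finset.notMem_empty σ),
      fun σ h => absurd h (Finset.notMem_empty σ)⟩

lemma myNot_mem_bd {M A : Finset (Finset V)} {σ : Finset V} {p : ℕ}
    (hM : IsComplex M) (hAsub : A ⊆ insert σ M) (hAcard : ∀ ρ ∈ A, ρ.card = p + 2)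
    (hσcard : σ.card = p + 1) (hσM : σ ∉ M) : σ ∉ bd A := by
  intro hmem
  rw [mem_bd] at hmem
  obtain ⟨ρ, hρ⟩ := Finset.card_pos.mp hmem.pos
  rw [Finset.mem_filter] at hρ
  obtain ⟨hρA, hσf⟩ := hρ
  obtain ⟨v, hv, hev⟩ := Finset.mem_image.mp hσf
  have hρM : ρ ∈ M := by
    rcases Finset.mem_insert.mp (hAsub hρA) with h | h
    · exfalso; have := hAcard ρ hρA; rw [h, hσcard] at this; omega
    · exact h
  exact hσM (hM.2 ρ hρM σ (hev ▸ Finset.erase_subset v ρ)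
    (Finset.card_pos.mp (by omega)))

end ConcatHelpers

/-- Concatenation of representatives.  Let `ζ₁ = (z, c)` be a `p`-th post-birth
representative for `[b, i]` and `ζ₂ = (z', c')` a `p`-th pre-death representative
for `[i, d]`, whose cycles at index `i` are homologous in `K_i`:
`z i + z' i = ∂A` for a `(p+1)`-chain `A` of `K_i`.  Then the concatenation
`ζ₁ ‖ ζ₂`, obtained by replacing the chain `c (i-1)` by `c (i-1) + A` and
splicing to `ζ₂`, is a `p`-th representative sequence for `[b, d]`. -/
theorem stmt17 {V : Type} [DecidableEq V]
    (F : List (Finset (Finset V))) (hF : ValidFilt F)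
    (p b i d : ℕ) (hbi : b ≤ i) (hid : i ≤ d)
    (z c z' c' : ℕ → Finset (Finset V))
    (h₁ : PostBirthRep F p b i z c) (h₂ : PreDeathRep F p i d z' c')
    (A : Finset (Finset V)) (hA : IsChainIn (F.getD i ∅) (p + 2) A)
    (hbdA : bd A = symmDiff (z i) (z' i)) :
    RepSeq F p b d
      (fun j => if j < i then z j else z' j)
      (fun j => if j + 1 < i then c j
        else if j + 1 = i then symmDiff (c j) A else c' j) := by
  obtain ⟨hbi', hcyc1, hchain1, hbirth1, hbirth2⟩ := h₁
  obtain ⟨hid', hcyc2, hchain2, hdeath1, hdeath2⟩ := h₂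
  refine ⟨le_trans hbi hid, ?_, ?_, ?_, ?_, ?_, ?_⟩
  · -- cycles
    intro j hbj hjd
    dsimp only
    split_ifs with hj
    · exact hcyc1 j hbj (le_of_lt hj)
    · exact hcyc2 j (le_of_not_gt hj) hjd
  · -- chain conditions
    intro j hbj hjd
    dsimp only
    rcases lt_trichotomy (j + 1) i with h | h | h
    · have hj : j < i := lt_trans (Nat.lt_succ_self j) h
      simp only [h, hj, if_true]
      exact hchain1 j hbj hj
    · subst h
      have hj : j < j + 1 := Nat.lt_succ_self j
      simp only [lt_self_iff_false, if_false, eq_self_iff_true, hj, if_true]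
      have hc := hchain1 j hbj hj
      have hbdsd : bd (symmDiff (c j) A) = symmDiff (z j) (z' (j + 1)) → True := fun _ => trivial
      constructor
      · intro hsub
        obtain ⟨hch, hbd⟩ := hc.1 hsub
        refine ⟨myIsChainIn_symmDiff hch hA, ?_⟩
        rw [bd_symmDiff, hbd, hbdA, symmDiff_assoc, symmDiff_symmDiff_cancel_left]
      · intro hsub
        obtain ⟨hch, hbd⟩ := hc.2 hsub
        refine ⟨myIsChainIn_symmDiff hch ⟨fun ρ hρ => hsub (hA.1 hρ), hA.2⟩, ?_⟩
        rw [bd_symmDiff, hbd, hbdA, symmDiff_assoc, symmDiff_symmDiff_cancel_left]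
    · have hij : ¬ j < i := by omega
      have h1 : ¬ j + 1 < i := by omega
      have h2 : ¬ j + 1 = i := by omega
      simp only [h1, h2, hij, if_false]
      exact hchain2 j (by omega) hjd
  · -- birth condition, first clause
    intro σ hσ heq
    dsimp only
    by_cases hb0 : b = 0
    · subst hb0
      simp only [Nat.zero_sub] at heq
      exact absurd (by rw [heq]; exact Finset.mem_insert_self σ _) hσ
    · have hb1 : b - 1 + 1 = b := Nat.succ_pred_eq_of_pos (Nat.pos_of_ne_zero hb0)
      rcases lt_or_eq_of_le hbi with hbc | hbc
      · have h1 : b - 1 + 1 < i := by omega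
        simp only [h1, hbc, if_true]
        exact hbirth1 σ hσ heq
      · subst hbc
        have h1 : ¬ b - 1 + 1 < b := by omega
        simp only [h1, if_false, hb1, eq_self_iff_true, if_true, lt_self_iff_false]
        obtain ⟨hch, hbd, hmem⟩ := hbirth1 σ hσ heq
        have hAsub : IsChainIn (F.getD (b - 1) ∅) (p + 2) A :=
          ⟨fun ρ hρ => by rw [heq]; exact Finset.mem_insert_of_mem (hA.1 hρ), hA.2⟩
        refine ⟨myIsChainIn_symmDiff hch hAsub, ?_, ?_⟩
        · rw [bd_symmDiff, hbd, hbdA, symmDiff_symmDiff_cancel_left]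
        · exact Finset.mem_symmDiff.mpr (Or.inl ⟨hmem, fun hσA => hσ (hA.1 hσA)⟩)
  · -- birth condition, second clause
    intro σ hσ heq
    dsimp only
    rcases lt_or_eq_of_le hbi with hbc | hbc
    · simp only [hbc, if_true]
      exact hbirth2 σ hσ heq
    · subst hbc
      simp only [lt_self_iff_false, if_false]
      have hzb : σ ∈ z b := hbirth2 σ hσ heq
      have hσcard : σ.card = p + 1 := (hcyc1 b le_rfl le_rfl).1.2 σ hzb
      have hnot : σ ∉ bd A :=
        myNot_mem_bd (myComplex_getD F hF (b - 1)) (by rw [← heq]; exact hA.1)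
          hA.2 hσcard hσ
      by_contra hcon
      exact hnot (by rw [hbdA]; exact Finset.mem_symmDiff.mpr (Or.inl ⟨hzb, hcon⟩))
  · -- death condition, first clause
    intro σ hσ heq
    dsimp only
    have h1 : ¬ d + 1 < i := by omega
    have h2 : ¬ d + 1 = i := by omega
    have h3 : ¬ d < i := by omega
    simp only [h1, h2, h3, if_false]
    exact hdeath1 σ hσ heq
  · -- death condition, second clause
    intro σ hσ heq
    dsimp only
    have h3 : ¬ d < i := by omega
    simp only [h3, if_false]
    exact hdeath2 σ hσ heq
end
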